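/- For n ∈ ℕ⁺ and 0 < α ≤ 1/n, let K_n^[α](x,t) = n·Σ_{i=0}^∞ (1+nα)^(−x/α)·(α+1/n)^(−i)·x^(i,−α)/i! · e^(−nt)(nt)^i/i! denote the kernel of the operator U_n^[α], so that U_n^[α](f; x) = ∫_0^∞ K_n^[α](x,t) f(t) dt. Then for every x ≥ 0: (1) for every y with 0 ≤ y < x, ∫_0^y K_n^[α](x,t) dt ≤ 3(x + 1/n)/(n(x − y)²); and (2) for every z with x < z, ∫_z^∞ K_n^[α](x,t) dt ≤ 3(x + 1/n)/(n(z − x)²). -/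

import Mathlib

open MeasureTheory Filter

noncomputable section

/-- The Szász basis function `e^(-nu) (nu)^i / i!`. -/
def szaszBasis (n i : ℕ) (u : ℝ) : ℝ :=
  Real.exp (-(n : ℝ) * u) * ((n : ℝ) * u) ^ i / (Nat.factorial i : ℝ)

/-- The rising factorial `x^(i,-α) = ∏_{j=0}^{i-1} (x + jα)` with increment `α`. -/
def risingFac (x α : ℝ) (i : ℕ) : ℝ :=
  ∏ j ∈ Finset.range i, (x + (j : ℝ) * α)

/-- The Durrmeyer modification of the generalized Szász-Mirakjan operators:
`U_n^[α](f; x) = n Σ_i (1+nα)^(−x/α) (α+1/n)^(−i) x^(i,−α)/i! ∫_0^∞ e^(−nu)(nu)^i/i! f(u) du`. -/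
def U (n : ℕ) (α : ℝ) (f : ℝ → ℝ) (x : ℝ) : ℝ :=
  (n : ℝ) * ∑' i : ℕ,
    (1 + (n : ℝ) * α) ^ (-x / α) * (α + 1 / (n : ℝ)) ^ (-(i : ℤ)) *
      (risingFac x α i / (Nat.factorial i : ℝ)) *
      ∫ u in Set.Ioi (0 : ℝ), szaszBasis n i u * f u

/-- The `m`-th central moment `Θ_{n,m}^[α](x) = U_n^[α]((t−x)^m; x)`. -/
def theta (n : ℕ) (α : ℝ) (m : ℕ) (x : ℝ) : ℝ :=
  U n α (fun t => (t - x) ^ m) x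

end

/-- The kernel of the operator `U_n^[α]`. -/
noncomputable def Ukernel (n : ℕ) (α : ℝ) (x t : ℝ) : ℝ :=
  (n : ℝ) * ∑' i : ℕ,
    (1 + (n : ℝ) * α) ^ (-x / α) * (α + 1 / (n : ℝ)) ^ (-(i : ℤ)) *
      (risingFac x α i / (Nat.factorial i : ℝ)) * szaszBasis n i t

namespace Stmt19Aux
open Set Topology Real


noncomputable def b (a : ℝ) (i : ℕ) : ℝ := risingFac a 1 i / (Nat.factorial i : ℝ)

lemma risingFac_succ (x α : ℝ) (i : ℕ) :
    risingFac x α (i + 1) = risingFac x α i * (x + i * α) := Finset.prod_range_succ _ _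

lemma risingFac_succ' (x α : ℝ) (i : ℕ) :
    risingFac x α (i + 1) = x * risingFac (x + α) α i := by
  rw [risingFac, Finset.prod_range_succ']
  simp only [Nat.cast_zero, zero_mul, add_zero, Nat.cast_add, Nat.cast_one]
  rw [mul_comm, risingFac]
  congr 1
  exact Finset.prod_congr rfl fun j _ => by push_cast; ring

lemma risingFac_nonneg {x α : ℝ} (hx : 0 ≤ x) (hα : 0 ≤ α) (i : ℕ) :
    0 ≤ risingFac x α i :=
  Finset.prod_nonneg fun j _ => by positivity

lemma b_nonneg {a : ℝ} (ha : 0 ≤ a) (i : ℕ) : 0 ≤ b a i :=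
  div_nonneg (risingFac_nonneg ha zero_le_one i) (Nat.cast_nonneg _)

lemma b_zero (a : ℝ) : b a 0 = 1 := by simp [b, risingFac]

lemma b_succ (a : ℝ) (i : ℕ) : ((i : ℝ) + 1) * b a (i + 1) = (a + i) * b a i := by
  have hi : (Nat.factorial i : ℝ) ≠ 0 := Nat.cast_ne_zero.2 (Nat.factorial_ne_zero i)
  rw [b, b, risingFac_succ, Nat.factorial_succ]
  push_cast
  field_simp

lemma b_succ' (a : ℝ) (i : ℕ) : ((i : ℝ) + 1) * b a (i + 1) = a * b (a + 1) i := by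
  have hi : (Nat.factorial i : ℝ) ≠ 0 := Nat.cast_ne_zero.2 (Nat.factorial_ne_zero i)
  rw [b, b, risingFac_succ', Nat.factorial_succ]
  push_cast
  field_simp

lemma summable_ratio_aux {f : ℕ → ℝ} (hf : ∀ i, 0 ≤ f i) {r' : ℝ} (hr' : r' < 1)
    (h : ∀ᶠ i in atTop, f (i + 1) ≤ r' * f i) : Summable f := by
  refine summable_of_ratio_norm_eventually_le hr' ?_
  filter_upwards [h] with i hi
  rw [Real.norm_of_nonneg (hf _), Real.norm_of_nonneg (hf _)]; exact hi

lemma exists_N {a r r' : ℝ} (ha : 0 ≤ a) (hr0 : 0 ≤ r) (h : r < r') :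
    ∃ N : ℕ, ∀ i : ℕ, N ≤ i → r * (a + i) ≤ r' * i := by
  refine ⟨⌈r * a / (r' - r)⌉₊, fun i hi => ?_⟩
  have h1 : r * a / (r' - r) ≤ (i : ℝ) :=
    le_trans (Nat.le_ceil _) (Nat.cast_le.2 hi)
  have h2 : r * a ≤ (r' - r) * i := by
    rw [div_le_iff₀ (by linarith)] at h1; linarith [h1]
  nlinarith

lemma summable_b_pow {a : ℝ} (ha : 0 ≤ a) {r : ℝ} (hr0 : 0 ≤ r) (hr1 : r < 1) :
    Summable (fun i => b a i * r ^ i) := by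
  set r' := (1 + r) / 2 with hr'def
  have hrr' : r < r' := by rw [hr'def]; linarith
  have hr'1 : r' < 1 := by rw [hr'def]; linarith
  obtain ⟨N, hN⟩ := exists_N ha hr0 hrr'
  refine summable_ratio_aux (fun i => mul_nonneg (b_nonneg ha i) (by positivity)) hr'1 ?_
  rw [eventually_atTop]
  refine ⟨N, fun i hi => ?_⟩
  have hb := b_succ a i
  have hip : (0:ℝ) < (i:ℝ) + 1 := by positivity
  have key : b a (i + 1) = (a + i) / ((i:ℝ) + 1) * b a i := by
    field_simp; linarith [hb]
  rw [key, pow_succ]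
  have h1 : r * (a + i) ≤ r' * ((i:ℝ)+1) := le_trans (hN i hi) (by nlinarith)
  have hbn := b_nonneg ha i
  have hrn : (0:ℝ) ≤ r ^ i := by positivity
  calc (a + i) / ((i:ℝ) + 1) * b a i * (r ^ i * r)
      = (r * (a + i) / ((i:ℝ)+1)) * (b a i * r ^ i) := by ring
    _ ≤ r' * (b a i * r ^ i) := by
        apply mul_le_mul_of_nonneg_right _ (by positivity)
        rw [div_le_iff₀ hip]; nlinarith

lemma summable_b_mul_pow {a : ℝ} (ha : 0 ≤ a) {r : ℝ} (hr0 : 0 ≤ r) (hr1 : r < 1) :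
    Summable (fun i => b a i * ((i : ℝ) * r ^ i)) := by
  set r' := (1 + r) / 2 with hr'def
  have hrr' : r < r' := by rw [hr'def]; linarith
  have hr'1 : r' < 1 := by rw [hr'def]; linarith
  have hr'0 : 0 ≤ r' := by rw [hr'def]; linarith
  obtain ⟨N, hN⟩ := exists_N ha hr0 hrr'
  refine summable_ratio_aux
    (fun i => mul_nonneg (b_nonneg ha i) (mul_nonneg (Nat.cast_nonneg i) (by positivity))) hr'1 ?_
  rw [eventually_atTop]
  refine ⟨N, fun i hi => ?_⟩
  have hb := b_succ a i
  have hbn := b_nonneg ha i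
  have hrn : (0:ℝ) ≤ r ^ i := by positivity
  push_cast
  calc b a (i+1) * (((i:ℝ)+1) * r ^ (i+1))
      = (((i:ℝ)+1) * b a (i+1)) * r ^ (i+1) := by ring
    _ = (a + i) * b a i * (r ^ i * r) := by rw [hb, pow_succ]
    _ = (r * (a + i)) * (b a i * r ^ i) := by ring
    _ ≤ (r' * i) * (b a i * r ^ i) := mul_le_mul_of_nonneg_right (hN i hi) (by positivity)
    _ = r' * (b a i * ((i:ℝ) * r ^ i)) := by ring
lemma pow_pred_mul {y : ℝ} {i : ℕ} (hi : 0 < i) : y ^ i = y * y ^ (i - 1) := by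
  conv_lhs => rw [← Nat.sub_add_cancel hi]
  rw [pow_succ]; ring

lemma hasSum_b {a : ℝ} (ha : 0 ≤ a) {q : ℝ} (hq : 0 ≤ q) (hq1 : q < 1) :
    HasSum (fun i => b a i * q ^ i) ((1 - q) ^ (-a) : ℝ) := by
  set r := (1 + q) / 2 with hrdef
  have hr0 : 0 < r := by rw [hrdef]; linarith
  have hqr : q < r := by rw [hrdef]; linarith
  have hr1 : r < 1 := by rw [hrdef]; linarith
  set u : ℕ → ℝ := fun i => (b a i * ((i : ℝ) * r ^ i)) * r⁻¹ with hudef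
  have husum : Summable u := (summable_b_mul_pow ha hr0.le hr1).mul_right _
  set G : ℝ → ℝ := fun y => ∑' i, b a i * y ^ i with hGdef
  set D : ℝ → ℝ := fun y => ∑' i, b a i * ((i : ℝ) * y ^ (i - 1)) with hDdef
  have hball : ∀ y ∈ Metric.ball (0:ℝ) r, |y| < r := by
    intro y hy; simpa [Real.dist_eq] using hy
  have hbound : ∀ (i : ℕ) (y : ℝ), y ∈ Metric.ball (0:ℝ) r →
      ‖b a i * ((i : ℝ) * y ^ (i - 1))‖ ≤ u i := by
    intro i y hy
    have hy' := hball y hy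
    rw [Real.norm_eq_abs, abs_mul, abs_mul, abs_of_nonneg (b_nonneg ha i),
      Nat.abs_cast, abs_pow]
    rcases Nat.eq_zero_or_pos i with rfl | hi
    · simp [hudef]
    · have hyr : |y| ^ (i-1) ≤ r ^ (i-1) := pow_le_pow_left₀ (abs_nonneg y) hy'.le _
      have hru : u i = b a i * ((i:ℝ) * r ^ (i-1)) := by
        simp only [hudef]
        have hp : r ^ i = r ^ (i - 1) * r := by rw [pow_pred_mul hi]; ring
        rw [hp]; field_simp
      rw [hru]
      exact mul_le_mul_of_nonneg_left
        (mul_le_mul_of_nonneg_left hyr (Nat.cast_nonneg i)) (b_nonneg ha i)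
  have hG0sum : Summable fun i => b a i * (0:ℝ) ^ i :=
    summable_b_pow ha le_rfl one_pos
  have hkey : ∀ y ∈ Metric.ball (0:ℝ) r, HasDerivAt G (D y) y := by
    intro y hy
    exact hasDerivAt_tsum_of_isPreconnected husum Metric.isOpen_ball
      (convex_ball (0:ℝ) r).isPreconnected
      (fun i z _ => (hasDerivAt_pow i z).const_mul (b a i))
      hbound (Metric.mem_ball_self hr0) hG0sum hy
  have hfe : ∀ y ∈ Metric.ball (0:ℝ) r, (1 - y) * D y = a * G y := by
    intro y hy
    have hy' := hball y hy
    have h1 : Summable (fun i => b a i * ((i : ℝ) * y ^ (i - 1))) :=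
      husum.of_norm_bounded (fun i => hbound i y hy)
    have h2 : Summable (fun i => b a i * y ^ i) := by
      refine (summable_b_pow ha hr0.le hr1).of_norm_bounded (fun i => ?_)
      rw [Real.norm_eq_abs, abs_mul, abs_of_nonneg (b_nonneg ha i), abs_pow]
      exact mul_le_mul_of_nonneg_left
        (pow_le_pow_left₀ (abs_nonneg y) hy'.le _) (b_nonneg ha i)
    have hDy : D y = ∑' i, b a (i+1) * (((i:ℝ)+1) * y ^ i) := by
      simp only [hDdef]
      rw [Summable.tsum_eq_zero_add h1]
      simp only [Nat.cast_zero, zero_mul, mul_zero, zero_add, Nat.cast_add, Nat.cast_one,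
        Nat.add_sub_cancel]
    have hterm : ∀ i : ℕ, b a (i+1) * (((i:ℝ)+1) * y ^ i)
        = a * (b a i * y ^ i) + y * (b a i * ((i:ℝ) * y ^ (i-1))) := by
      intro i
      have hb := b_succ a i
      have h3 : b a (i+1) * (((i:ℝ)+1) * y ^ i) = (((i:ℝ)+1) * b a (i+1)) * y ^ i := by ring
      rw [h3, hb]
      rcases Nat.eq_zero_or_pos i with rfl | hi
      · simp
      · rw [pow_pred_mul hi]; ring
    have hsum2 : HasSum (fun i => a * (b a i * y ^ i) + y * (b a i * ((i:ℝ) * y ^ (i-1))))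
        (a * G y + y * D y) := (h2.hasSum.mul_left a).add (h1.hasSum.mul_left y)
    have hfix : D y = a * G y + y * D y := by
      conv_lhs => rw [hDy, tsum_congr hterm]
      exact hsum2.tsum_eq
    linarith [hfix]
  set h : ℝ → ℝ := fun y => (1 - y) ^ a * G y with hhdef
  have hsub : Icc (0:ℝ) q ⊆ Metric.ball (0:ℝ) r := by
    intro y hy
    rw [Metric.mem_ball, Real.dist_eq, sub_zero, abs_of_nonneg hy.1]
    exact lt_of_le_of_lt hy.2 hqr
  have hrpowd : ∀ y : ℝ, y < 1 →
      HasDerivAt (fun z => (1 - z) ^ a) (-1 * a * (1 - y) ^ (a - 1)) y := by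
    intro y hy1
    have hne : (1 : ℝ) - y ≠ 0 := by linarith
    have hd : HasDerivAt (fun z : ℝ => 1 - z) (-1) y := (hasDerivAt_id y).const_sub 1
    exact hd.rpow_const (Or.inl hne)
  have hderiv0 : ∀ y ∈ Ico (0:ℝ) q, HasDerivAt h 0 y := by
    intro y hy
    have hyb : y ∈ Metric.ball (0:ℝ) r := hsub ⟨hy.1, hy.2.le⟩
    have hy1 : 0 < 1 - y := by have := hy.2; linarith
    have d3 : HasDerivAt h (-1 * a * (1 - y) ^ (a - 1) * G y + (1 - y) ^ a * D y) y :=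
      (hrpowd y (by linarith)).mul (hkey y hyb)
    have hpow : (1 - y) ^ a = (1 - y) ^ (a - 1) * (1 - y) := by
      rw [← Real.rpow_add_one hy1.ne' (a - 1)]; ring_nf
    have hz : -1 * a * (1 - y) ^ (a - 1) * G y + (1 - y) ^ a * D y = 0 := by
      rw [hpow]
      have h4 : -1 * a * (1 - y) ^ (a - 1) * G y + (1 - y) ^ (a-1) * (1 - y) * D y
          = (1 - y) ^ (a - 1) * ((1 - y) * D y - a * G y) := by ring
      rw [h4, hfe y hyb, sub_self, mul_zero]
    rw [← hz]; exact d3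
  have hcont : ContinuousOn h (Icc 0 q) := by
    intro y hy
    have hyb : y ∈ Metric.ball (0:ℝ) r := hsub hy
    have hy1 : y < 1 := lt_of_le_of_lt hy.2 hq1
    exact (((hrpowd y hy1).mul (hkey y hyb)).continuousAt).continuousWithinAt
  have hconst := constant_of_has_deriv_right_zero hcont
    (fun y hy => (hderiv0 y hy).hasDerivWithinAt) q (right_mem_Icc.2 hq)
  have hG0 : G 0 = 1 := by
    simp only [hGdef]
    rw [tsum_eq_single 0 (fun i hi => by simp [zero_pow hi])]
    simp [b_zero]
  have hval : (1 - q) ^ a * G q = 1 := by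
    have h5 : h q = h 0 := hconst
    simp only [hhdef] at h5
    rw [h5, sub_zero, Real.one_rpow, one_mul, hG0]
  have h1q : 0 < 1 - q := by linarith
  have hGq : G q = (1 - q) ^ (-a) := by
    have hpos : (0:ℝ) < (1 - q) ^ a := Real.rpow_pos_of_pos h1q a
    rw [Real.rpow_neg h1q.le]
    exact eq_inv_of_mul_eq_one_right hval
  have hsumq : Summable (fun i => b a i * q ^ i) := summable_b_pow ha hq hq1
  rw [← hGq]
  exact hsumq.hasSum
lemma hasSum_ib {a : ℝ} (ha : 0 ≤ a) {q : ℝ} (hq : 0 ≤ q) (hq1 : q < 1) :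
    HasSum (fun i => b a i * ((i : ℝ) * q ^ i)) (a * q * (1 - q) ^ (-a - 1) : ℝ) := by
  have h := (hasSum_b (a := a + 1) (by linarith) hq hq1).mul_left (a * q)
  have hshift : HasSum (fun i => b a (i + 1) * (((i : ℝ) + 1) * q ^ (i + 1)))
      (a * q * (1 - q) ^ (-(a + 1))) := by
    refine h.congr_fun fun i => ?_
    have hb := b_succ' a i
    calc b a (i + 1) * (((i : ℝ) + 1) * q ^ (i + 1))
        = (((i:ℝ) + 1) * b a (i + 1)) * (q ^ i * q) := by rw [pow_succ]; ring
      _ = (a * b (a + 1) i) * (q ^ i * q) := by rw [hb]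
      _ = a * q * (b (a + 1) i * q ^ i) := by ring
  have h2 := (hasSum_nat_add_iff (f := fun i => b a i * ((i : ℝ) * q ^ i)) 1).mp
    (hshift.congr_fun fun i => by push_cast; ring_nf)
  simp only [Finset.range_one, Finset.sum_singleton, Nat.cast_zero, zero_mul, mul_zero,
    add_zero] at h2
  convert h2 using 2
  · rfl
  ring
lemma hasSum_iib {a : ℝ} (ha : 0 ≤ a) {q : ℝ} (hq : 0 ≤ q) (hq1 : q < 1) :
    HasSum (fun i => b a i * (((i : ℝ) * ((i : ℝ) - 1)) * q ^ i))
      (a * (a + 1) * q ^ 2 * (1 - q) ^ (-a - 2) : ℝ) := by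
  have h := (hasSum_ib (a := a + 1) (by linarith) hq hq1).mul_left (a * q)
  have hshift : HasSum (fun i => b a (i + 1) * ((((i:ℝ) + 1) * (i : ℝ)) * q ^ (i + 1)))
      (a * q * ((a + 1) * q * (1 - q) ^ (-(a + 1) - 1))) := by
    refine h.congr_fun fun i => ?_
    have hb := b_succ' a i
    calc b a (i + 1) * ((((i:ℝ) + 1) * (i : ℝ)) * q ^ (i + 1))
        = (((i:ℝ) + 1) * b a (i + 1)) * ((i:ℝ) * (q ^ i * q)) := by rw [pow_succ]; ring
      _ = (a * b (a + 1) i) * ((i:ℝ) * (q ^ i * q)) := by rw [hb]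
      _ = a * q * (b (a + 1) i * ((i:ℝ) * q ^ i)) := by ring
  have h2 := (hasSum_nat_add_iff
      (f := fun i => b a i * (((i : ℝ) * ((i : ℝ) - 1)) * q ^ i)) 1).mp
    (hshift.congr_fun fun i => by push_cast; ring_nf)
  simp only [Finset.range_one, Finset.sum_singleton, Nat.cast_zero, zero_mul, mul_zero,
    zero_sub, add_zero] at h2
  rw [show -(a + 1) - 1 = -a - 2 by ring] at h2
  convert h2 using 1
  · rfl
  ring
lemma integrable_pow_exp {n : ℕ} (hn : 0 < n) (k : ℕ) :
    IntegrableOn (fun t : ℝ => t ^ k * Real.exp (-(n : ℝ) * t)) (Ioi 0) := by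
  have hb : (0:ℝ) < (n : ℝ) / 2 := by positivity
  set c : ℝ := (n : ℝ) / 2 with hcdef
  refine integrable_of_isBigO_exp_neg hb ?_ ?_
  · exact ((continuous_pow k).mul ((continuous_const.mul continuous_id).rexp)).continuousOn
  · rw [Asymptotics.isBigO_iff]
    refine ⟨1, ?_⟩
    have hC : (0:ℝ) < c ^ k := by positivity
    have hT : Tendsto (fun t : ℝ => (c * t) ^ k * Real.exp (-(c * t))) atTop (𝓝 0) :=
      (tendsto_pow_mul_exp_neg_atTop_nhds_zero k).comp (tendsto_id.const_mul_atTop hb)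
    have hev : ∀ᶠ t in atTop, (c * t) ^ k * Real.exp (-(c * t)) < c ^ k :=
      hT.eventually_lt_const hC
    filter_upwards [hev, eventually_ge_atTop (0:ℝ)] with t ht ht0
    have key : t ^ k * Real.exp (-c * t) ≤ 1 := by
      have h2 : (c * t) ^ k * Real.exp (-(c * t)) = c ^ k * (t ^ k * Real.exp (-c * t)) := by
        rw [mul_pow, neg_mul]; ring
      rw [h2] at ht
      nlinarith [Real.exp_pos (-c * t), pow_nonneg ht0 k]
    have hsplit : Real.exp (-(n:ℝ) * t) = Real.exp (-c * t) * Real.exp (-c * t) := by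
      rw [← Real.exp_add]; congr 1; rw [hcdef]; ring
    rw [Real.norm_eq_abs, Real.norm_eq_abs, one_mul, abs_of_nonneg (Real.exp_pos _).le,
      abs_of_nonneg (by positivity : (0:ℝ) ≤ t ^ k * Real.exp (-(n:ℝ) * t)), hsplit]
    calc t ^ k * (Real.exp (-c * t) * Real.exp (-c * t))
        = (t ^ k * Real.exp (-c * t)) * Real.exp (-c * t) := by ring
      _ ≤ 1 * Real.exp (-c * t) := mul_le_mul_of_nonneg_right key (Real.exp_pos _).le
      _ = Real.exp (-c * t) := one_mul _

lemma szasz_eq (n i m : ℕ) (t : ℝ) :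
    szaszBasis n i t * t ^ m
      = ((n:ℝ) ^ i / (Nat.factorial i : ℝ)) * (t ^ (i + m) * Real.exp (-(n : ℝ) * t)) := by
  rw [szaszBasis, mul_pow, pow_add]; ring

lemma szasz_integrable {n : ℕ} (hn : 0 < n) (i m : ℕ) :
    IntegrableOn (fun t : ℝ => szaszBasis n i t * t ^ m) (Ioi 0) := by
  have h := (integrable_pow_exp hn (i + m)).const_mul ((n:ℝ) ^ i / (Nat.factorial i : ℝ))
  simp only [szasz_eq n i m]
  exact h

lemma szasz_integral {n : ℕ} (hn : 0 < n) (i m : ℕ) :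
    ∫ t in Ioi (0:ℝ), szaszBasis n i t * t ^ m
      = (Nat.factorial (i + m) : ℝ) / ((Nat.factorial i : ℝ) * (n:ℝ) ^ (m + 1)) := by
  have hnR : (0:ℝ) < n := Nat.cast_pos.2 hn
  have hfac : (0:ℝ) < (Nat.factorial i : ℝ) := Nat.cast_pos.2 (Nat.factorial_pos i)
  have hgam := integral_rpow_mul_exp_neg_mul_Ioi
    (a := ((i + m : ℕ) : ℝ) + 1) (r := (n : ℝ)) (by positivity) hnR
  have hcore : ∫ t in Ioi (0:ℝ), t ^ (i + m) * Real.exp (-(n : ℝ) * t)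
      = (1 / (n:ℝ)) ^ (((i + m : ℕ) : ℝ) + 1) * Real.Gamma (((i + m : ℕ) : ℝ) + 1) := by
    rw [← hgam]
    refine setIntegral_congr_fun measurableSet_Ioi (fun t ht => ?_)
    rw [add_sub_cancel_right, Real.rpow_natCast, neg_mul]
  simp only [szasz_eq n i m]
  rw [integral_const_mul, hcore, Real.Gamma_nat_eq_factorial]
  have hrp : ((1:ℝ) / (n:ℝ)) ^ (((i + m : ℕ) : ℝ) + 1) = ((1:ℝ) / (n:ℝ)) ^ ((i + m + 1 : ℕ)) := by
    rw [← Real.rpow_natCast ((1:ℝ)/(n:ℝ)) (i + m + 1)]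
    push_cast
    ring_nf
  rw [hrp, div_pow, one_pow, pow_add, pow_add]
  have h1 : (n:ℝ) ≠ 0 := hnR.ne'
  field_simp
  ring


lemma szasz_nonneg {n i : ℕ} {t : ℝ} (ht : 0 ≤ t) : 0 ≤ szaszBasis n i t := by
  rw [szaszBasis]; positivity

lemma szasz_le_one {n i : ℕ} {t : ℝ} (ht : 0 ≤ t) : szaszBasis n i t ≤ 1 := by
  rw [szaszBasis, mul_div_assoc]
  have h1 : ((n:ℝ) * t) ^ i / (Nat.factorial i : ℝ) ≤ Real.exp ((n:ℝ) * t) :=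
    Real.pow_div_factorial_le_exp _ (by positivity) i
  calc Real.exp (-(n:ℝ) * t) * (((n:ℝ) * t) ^ i / (Nat.factorial i : ℝ))
      ≤ Real.exp (-(n:ℝ) * t) * Real.exp ((n:ℝ) * t) :=
        mul_le_mul_of_nonneg_left h1 (Real.exp_pos _).le
    _ = 1 := by rw [← Real.exp_add]; ring_nf; exact Real.exp_zero

lemma szasz_measurable (n i : ℕ) : Measurable (szaszBasis n i) := by
  unfold szaszBasis
  fun_prop

lemma szasz_sq_integrable {n : ℕ} (hn : 0 < n) (i : ℕ) (x : ℝ) :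
    IntegrableOn (fun t : ℝ => szaszBasis n i t * (t - x) ^ 2) (Ioi 0) := by
  have h0 := szasz_integrable hn i 0
  have h1 := szasz_integrable hn i 1
  have h2 := szasz_integrable hn i 2
  have e : (fun t : ℝ => szaszBasis n i t * (t - x) ^ 2)
      = fun t => (szaszBasis n i t * t ^ 2 - (2 * x) * (szaszBasis n i t * t ^ 1))
          + x ^ 2 * (szaszBasis n i t * t ^ 0) := by
    funext t; ring
  rw [e]
  exact ((h2.sub (h1.const_mul _)).add (h0.const_mul _))

lemma szasz_sq_integral {n : ℕ} (hn : 0 < n) (i : ℕ) (x : ℝ) :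
    ∫ t in Ioi (0:ℝ), szaszBasis n i t * (t - x) ^ 2
      = ((i:ℝ) * ((i:ℝ) - 1)) * (1 / (n:ℝ)^3)
        + (i:ℝ) * (4 / (n:ℝ)^3 - 2 * x / (n:ℝ)^2)
        + (2 / (n:ℝ)^3 - 2 * x / (n:ℝ)^2 + x^2 / (n:ℝ)) := by
  have hnR : (0:ℝ) < n := Nat.cast_pos.2 hn
  have h0 := szasz_integrable hn i 0
  have h1 := szasz_integrable hn i 1
  have h2 := szasz_integrable hn i 2
  have e : (fun t : ℝ => szaszBasis n i t * (t - x) ^ 2)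
      = fun t => (szaszBasis n i t * t ^ 2 - (2 * x) * (szaszBasis n i t * t ^ 1))
          + x ^ 2 * (szaszBasis n i t * t ^ 0) := by
    funext t; ring
  have hsub : Integrable
      (fun t : ℝ => szaszBasis n i t * t ^ 2 - 2 * x * (szaszBasis n i t * t ^ 1))
      (volume.restrict (Ioi 0)) := h2.sub (h1.const_mul _)
  have hc0 : Integrable (fun t : ℝ => x ^ 2 * (szaszBasis n i t * t ^ 0))
      (volume.restrict (Ioi 0)) := h0.const_mul _
  have hc1 : Integrable (fun t : ℝ => 2 * x * (szaszBasis n i t * t ^ 1))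
      (volume.restrict (Ioi 0)) := h1.const_mul _
  rw [e, integral_add hsub hc0,
    integral_sub h2 hc1, integral_const_mul, integral_const_mul,
    szasz_integral hn i 0, szasz_integral hn i 1, szasz_integral hn i 2]
  have hfac : (0:ℝ) < (Nat.factorial i : ℝ) := Nat.cast_pos.2 (Nat.factorial_pos i)
  have hf2 : (Nat.factorial (i+2) : ℝ) = ((i:ℝ)+2) * (((i:ℝ)+1) * (Nat.factorial i : ℝ)) := by
    rw [Nat.factorial_succ, Nat.factorial_succ]; push_cast; ring
  have hf1 : (Nat.factorial (i+1) : ℝ) = ((i:ℝ)+1) * (Nat.factorial i : ℝ) := by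
    rw [Nat.factorial_succ]; push_cast; ring
  rw [add_zero, hf2, hf1]
  have h1 : (n:ℝ) ≠ 0 := hnR.ne'
  field_simp
  ring

lemma master {n : ℕ} (hn : 0 < n) {α : ℝ} (hα : 0 < α) (hαn : α ≤ 1 / n)
    {x : ℝ} (hx : 0 ≤ x) {S : Set ℝ} (hS : MeasurableSet S) (hS0 : S ⊆ Ioi 0)
    {Dv : ℝ} (hD : 0 < Dv) (hSD : ∀ t ∈ S, Dv ≤ (t - x) ^ 2) :
    ∫ t in S, Ukernel n α x t ≤ 3 * (x + 1 / n) / (n * Dv) := by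
  have hnR : (0:ℝ) < n := Nat.cast_pos.2 hn
  set a : ℝ := x / α with hadef
  have ha : 0 ≤ a := div_nonneg hx hα.le
  have hden : (0:ℝ) < 1 + n * α := by positivity
  set q : ℝ := n * α / (1 + n * α) with hqdef
  have hq : 0 ≤ q := by positivity
  have hq1 : q < 1 := by rw [hqdef, div_lt_one hden]; linarith
  have h1q : 1 - q = (1 + (n:ℝ) * α)⁻¹ := by rw [hqdef]; field_simp; ring
  have h1qpos : 0 < 1 - q := by linarith
  set A : ℝ := (1 - q) ^ a with hAdef
  have hApos : 0 < A := Real.rpow_pos_of_pos h1qpos a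
  set c : ℕ → ℝ := fun i => A * (b a i * q ^ i) with hcdef
  have hc0 : ∀ i, 0 ≤ c i := fun i => by
    have := b_nonneg ha i; positivity
  -- rewriting the coefficient
  have hcoef : ∀ i : ℕ,
      (1 + (n:ℝ) * α) ^ (-x / α) * (α + 1 / (n:ℝ)) ^ (-(i : ℤ)) *
        (risingFac x α i / (Nat.factorial i : ℝ)) = c i := by
    intro i
    have hαn0 : (0:ℝ) < α + 1 / n := by positivity
    have hrf : risingFac x α i = α ^ i * risingFac a 1 i := by
      rw [risingFac, risingFac]
      calc ∏ j ∈ Finset.range i, (x + (j:ℝ) * α)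
          = ∏ j ∈ Finset.range i, (α * (a + (j:ℝ) * 1)) :=
            Finset.prod_congr rfl (fun j _ => by rw [hadef]; field_simp; try ring)
        _ = (∏ _j ∈ Finset.range i, α) * ∏ j ∈ Finset.range i, (a + (j:ℝ) * 1) :=
            Finset.prod_mul_distrib
        _ = α ^ i * ∏ j ∈ Finset.range i, (a + (j:ℝ) * 1) := by
            rw [Finset.prod_const, Finset.card_range]
    have hA' : (1 + (n:ℝ) * α) ^ (-x / α) = A := by
      have hinv : ((1 + (n:ℝ)*α)⁻¹) ^ a = (1 + (n:ℝ)*α) ^ (-a) := by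
        rw [Real.inv_rpow hden.le, ← Real.rpow_neg hden.le]
      rw [hAdef, h1q, hinv, neg_div]
    have hzp : (α + 1 / (n:ℝ)) ^ (-(i : ℤ)) = ((α + 1/(n:ℝ)) ^ i)⁻¹ := by
      rw [zpow_neg, zpow_natCast]
    have hqi : α ^ i * ((α + 1/(n:ℝ)) ^ i)⁻¹ = q ^ i := by
      rw [← inv_pow, ← mul_pow]
      congr 1
      rw [hqdef]
      field_simp
      ring
    rw [hA', hzp, hrf, hcdef]
    have hb : b a i = (∏ j ∈ Finset.range i, (a + (j:ℝ) * 1)) / (Nat.factorial i : ℝ) := rfl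
    calc A * ((α + 1/(n:ℝ)) ^ i)⁻¹ * (α ^ i * risingFac a 1 i / (Nat.factorial i : ℝ))
        = A * ((α ^ i * ((α + 1/(n:ℝ)) ^ i)⁻¹) * (risingFac a 1 i / (Nat.factorial i : ℝ))) := by
          ring
      _ = A * (q ^ i * b a i) := by rw [hqi]; rfl
      _ = A * (b a i * q ^ i) := by ring
  -- the three sums
  have h0 : HasSum c 1 := by
    have h := (hasSum_b ha hq hq1).mul_left A
    have hv : A * (1 - q) ^ (-a) = 1 := by
      rw [hAdef, ← Real.rpow_add h1qpos]
      simp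
    rw [hcdef]
    exact hv ▸ h
  have h1 : HasSum (fun i => c i * (i:ℝ)) ((n:ℝ) * x) := by
    have h := (hasSum_ib ha hq hq1).mul_left A
    have hcomb : (1-q) ^ a * (1-q) ^ (-a-1) = (1+(n:ℝ)*α) := by
      rw [← Real.rpow_add h1qpos, show a + (-a - 1) = -1 by ring, Real.rpow_neg_one, h1q,
        inv_inv]
    have hv : A * (a * q * (1 - q) ^ (-a - 1)) = (n:ℝ) * x := by
      rw [hAdef]
      calc (1-q)^a * (a * q * (1-q)^(-a-1)) = (a*q) * ((1-q)^a * (1-q)^(-a-1)) := by ring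
        _ = a * q * (1+(n:ℝ)*α) := by rw [hcomb]
        _ = (n:ℝ) * x := by rw [hadef, hqdef]; field_simp
    refine hv ▸ (h.congr_fun fun i => ?_)
    rw [hcdef]; ring
  have h2 : HasSum (fun i => c i * ((i:ℝ) * ((i:ℝ) - 1))) ((n:ℝ)^2 * x * (x + α)) := by
    have h := (hasSum_iib ha hq hq1).mul_left A
    have hcomb : (1-q) ^ a * (1-q) ^ (-a-2) = (1+(n:ℝ)*α)^2 := by
      rw [← Real.rpow_add h1qpos, show a + (-a - 2) = -(2:ℝ) by ring,
        Real.rpow_neg h1qpos.le, Real.rpow_two, h1q, inv_pow, inv_inv]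
    have hv : A * (a * (a+1) * q^2 * (1 - q) ^ (-a - 2)) = (n:ℝ)^2 * x * (x + α) := by
      rw [hAdef]
      calc (1-q)^a * (a * (a+1) * q^2 * (1-q)^(-a-2))
          = (a*(a+1)*q^2) * ((1-q)^a * (1-q)^(-a-2)) := by ring
        _ = a * (a+1) * q^2 * (1+(n:ℝ)*α)^2 := by rw [hcomb]
        _ = (n:ℝ)^2 * x * (x + α) := by rw [hadef, hqdef]; field_simp
    refine hv ▸ (h.congr_fun fun i => ?_)
    rw [hcdef]; ring
  -- the total sum
  set W : ℝ := α*x/(n:ℝ) + 2*x/(n:ℝ)^2 + 2/(n:ℝ)^3 with hWdef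
  have hWpos : 0 ≤ W := by rw [hWdef]; positivity
  have hW : HasSum (fun i => c i * (∫ t in Ioi (0:ℝ), szaszBasis n i t * (t - x)^2)) W := by
    set C1 : ℝ := 4/(n:ℝ)^3 - 2*x/(n:ℝ)^2 with hC1
    set C2 : ℝ := 2/(n:ℝ)^3 - 2*x/(n:ℝ)^2 + x^2/(n:ℝ) with hC2
    have hlin := ((h2.mul_right (1/(n:ℝ)^3)).add (h1.mul_right C1)).add (h0.mul_right C2)
    have hWv : ((n:ℝ)^2*x*(x+α) * (1/(n:ℝ)^3) + (n:ℝ)*x*C1) + 1*C2 = W := by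
      rw [hC1, hC2, hWdef]; field_simp; ring
    refine hWv ▸ (hlin.congr_fun fun i => ?_)
    rw [szasz_sq_integral hn i x]
    ring
  have hWb : W ≤ 3 * (x + 1/(n:ℝ)) / (n:ℝ)^2 := by
    have h3 : 3 * (x + 1/(n:ℝ)) / (n:ℝ)^2 - W = (x/(n:ℝ) - α*x)/(n:ℝ) + 1/(n:ℝ)^3 := by
      rw [hWdef]; field_simp; ring
    have key : α * x ≤ x / n := by
      calc α*x ≤ (1/n)*x := mul_le_mul_of_nonneg_right hαn hx
        _ = x/n := by ring
    have h4 : 0 ≤ (x/(n:ℝ) - α*x)/(n:ℝ) := div_nonneg (by linarith) hnR.le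
    have h5 : (0:ℝ) ≤ 1/(n:ℝ)^3 := by positivity
    linarith
  -- measure theory
  set f : ℕ → ℝ → ℝ := fun i t => c i * szaszBasis n i t with hfdef
  set F : ℝ → ENNReal := fun t => ∑' i, ENNReal.ofReal (f i t) with hFdef
  have hfm : ∀ i, Measurable (f i) := fun i => (szasz_measurable n i).const_mul (c i)
  have hFm : Measurable F :=
    Measurable.ennreal_tsum fun i => ENNReal.measurable_ofReal.comp (hfm i)
  have hfnn : ∀ i (t : ℝ), 0 ≤ t → 0 ≤ f i t := fun i t ht =>
    mul_nonneg (hc0 i) (szasz_nonneg ht)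
  have hfsum : ∀ t : ℝ, 0 ≤ t → Summable (fun i => f i t) := by
    intro t ht
    refine Summable.of_nonneg_of_le (fun i => hfnn i t ht) (fun i => ?_) h0.summable
    calc f i t ≤ c i * 1 := mul_le_mul_of_nonneg_left (szasz_le_one ht) (hc0 i)
      _ = c i := mul_one _
  have hFt : ∀ t : ℝ, 0 ≤ t → F t = ENNReal.ofReal (∑' i, f i t) := fun t ht =>
    (ENNReal.ofReal_tsum_of_nonneg (fun i => hfnn i t ht) (hfsum t ht)).symm
  have hUk : ∀ t ∈ S, Ukernel n α x t = (n:ℝ) * (F t).toReal := by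
    intro t ht
    have ht0 : (0:ℝ) < t := hS0 ht
    rw [Ukernel]
    have : ∑' (i : ℕ), (1 + (n:ℝ) * α) ^ (-x / α) * (α + 1 / (n:ℝ)) ^ (-(i : ℤ)) *
        (risingFac x α i / (Nat.factorial i : ℝ)) * szaszBasis n i t = ∑' i, f i t :=
      tsum_congr fun i => by rw [hcoef i]
    rw [this, hFt t ht0.le, ENNReal.toReal_ofReal (tsum_nonneg fun i => hfnn i t ht0.le)]
  -- the key lintegral computation
  have hkey : ∫⁻ t in Ioi (0:ℝ), F t * ENNReal.ofReal ((t-x)^2) = ENNReal.ofReal W := by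
    have hcg : ∫⁻ t in Ioi (0:ℝ), F t * ENNReal.ofReal ((t-x)^2)
        = ∫⁻ t in Ioi (0:ℝ), ∑' i, ENNReal.ofReal (f i t * (t-x)^2) := by
      refine lintegral_congr_ae ?_
      filter_upwards [ae_restrict_mem measurableSet_Ioi] with t ht
      simp only [hFdef]
      rw [← ENNReal.tsum_mul_right]
      exact tsum_congr fun i => (ENNReal.ofReal_mul (hfnn i t (le_of_lt ht))).symm
    have hmeas : ∀ i : ℕ, AEMeasurable (fun t => ENNReal.ofReal (f i t * (t-x)^2))
        (volume.restrict (Ioi 0)) := fun i =>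
      (ENNReal.measurable_ofReal.comp
        ((hfm i).mul ((measurable_id.sub measurable_const).pow_const 2))).aemeasurable
    rw [hcg, lintegral_tsum hmeas]
    have hint : ∀ i : ℕ, Integrable (fun t => f i t * (t-x)^2) (volume.restrict (Ioi 0)) := by
      intro i
      have h := (szasz_sq_integrable hn i x).const_mul (c i)
      refine h.congr (ae_of_all _ fun t => by rw [hfdef]; ring)
    have heach : ∀ i : ℕ, ∫⁻ t in Ioi (0:ℝ), ENNReal.ofReal (f i t * (t-x)^2)
        = ENNReal.ofReal (c i * ∫ t in Ioi (0:ℝ), szaszBasis n i t * (t-x)^2) := by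
      intro i
      rw [← ofReal_integral_eq_lintegral_ofReal (hint i) ?_]
      · congr 1
        rw [hfdef]
        simp only
        rw [show (fun t => c i * szaszBasis n i t * (t-x)^2)
            = (fun t => c i * (szaszBasis n i t * (t-x)^2)) from funext fun t => by ring]
        rw [integral_const_mul]
      · filter_upwards [ae_restrict_mem measurableSet_Ioi] with t ht
        exact mul_nonneg (hfnn i t (le_of_lt ht)) (sq_nonneg _)
    rw [tsum_congr heach]
    rw [← ENNReal.ofReal_tsum_of_nonneg (fun i => mul_nonneg (hc0 i)
      (setIntegral_nonneg measurableSet_Ioi fun t ht =>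
        mul_nonneg (szasz_nonneg (le_of_lt ht)) (sq_nonneg _))) hW.summable]
    rw [hW.tsum_eq]
  -- bounding the set lintegral
  have hDne : ENNReal.ofReal Dv ≠ 0 := (ENNReal.ofReal_pos.2 hD).ne'
  have hlin2 : (∫⁻ t in S, F t) ≤ ENNReal.ofReal (W / Dv) := by
    have step1 : (∫⁻ t in S, F t)
        ≤ ∫⁻ t in S, F t * (ENNReal.ofReal ((t-x)^2) * (ENNReal.ofReal Dv)⁻¹) := by
      refine lintegral_mono_ae ?_
      filter_upwards [ae_restrict_mem hS] with t ht
      have hle : ENNReal.ofReal Dv ≤ ENNReal.ofReal ((t-x)^2) :=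
        ENNReal.ofReal_le_ofReal (hSD t ht)
      have h1 : (1:ENNReal) ≤ ENNReal.ofReal ((t-x)^2) * (ENNReal.ofReal Dv)⁻¹ := by
        rw [← ENNReal.mul_inv_cancel hDne ENNReal.ofReal_ne_top]
        exact mul_le_mul_left hle _
      calc F t = F t * 1 := (mul_one _).symm
        _ ≤ F t * (ENNReal.ofReal ((t-x)^2) * (ENNReal.ofReal Dv)⁻¹) :=
            mul_le_mul_right h1 _
    have step2 : ∫⁻ t in S, F t * (ENNReal.ofReal ((t-x)^2) * (ENNReal.ofReal Dv)⁻¹)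
        = (∫⁻ t in S, F t * ENNReal.ofReal ((t-x)^2)) * (ENNReal.ofReal Dv)⁻¹ := by
      rw [← lintegral_mul_const' ((ENNReal.ofReal Dv)⁻¹) _
        (ENNReal.inv_ne_top.2 hDne)]
      congr 1
      funext t
      rw [mul_assoc]
    have step3 : (∫⁻ t in S, F t * ENNReal.ofReal ((t-x)^2))
        ≤ ∫⁻ t in Ioi (0:ℝ), F t * ENNReal.ofReal ((t-x)^2) :=
      lintegral_mono_set hS0
    calc (∫⁻ t in S, F t) ≤ _ := step1
      _ = _ := step2
      _ ≤ (∫⁻ t in Ioi (0:ℝ), F t * ENNReal.ofReal ((t-x)^2)) * (ENNReal.ofReal Dv)⁻¹ :=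
          mul_le_mul_left step3 _
      _ = ENNReal.ofReal W * (ENNReal.ofReal Dv)⁻¹ := by rw [hkey]
      _ = ENNReal.ofReal (W / Dv) := by
          rw [ENNReal.ofReal_div_of_pos hD, div_eq_mul_inv]
  -- conclude
  have hWD : 0 ≤ W / Dv := div_nonneg hWpos hD.le
  have htoReal : (∫⁻ t in S, F t).toReal ≤ W / Dv :=
    ENNReal.toReal_le_of_le_ofReal hWD hlin2
  have hIeq : ∫ t in S, Ukernel n α x t = (n:ℝ) * (∫⁻ t in S, F t).toReal := by
    rw [setIntegral_congr_fun hS (fun t ht => hUk t ht), integral_const_mul]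
    congr 1
    rw [integral_toReal (hFm.aemeasurable.restrict) ?_]
    filter_upwards [ae_restrict_mem hS] with t ht
    rw [hFt t (le_of_lt (hS0 ht))]
    exact ENNReal.ofReal_lt_top
  rw [hIeq]
  have hfin : (n:ℝ) * (W / Dv) ≤ 3 * (x + 1/n) / (n * Dv) := by
    have e1 : (n:ℝ) * (W / Dv) = ((n:ℝ) * W) / Dv := by ring
    have e2 : 3 * (x + 1/(n:ℝ)) / ((n:ℝ) * Dv) = (3 * (x + 1/(n:ℝ)) / (n:ℝ)) / Dv := by
      rw [div_div]
    have e3 : (n:ℝ) * W ≤ 3 * (x + 1/(n:ℝ)) / (n:ℝ) := by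
      have := mul_le_mul_of_nonneg_left hWb hnR.le
      calc (n:ℝ) * W ≤ (n:ℝ) * (3 * (x + 1/(n:ℝ)) / (n:ℝ)^2) := this
        _ = 3 * (x + 1/(n:ℝ)) / (n:ℝ) := by field_simp
    rw [e1, e2]
    gcongr
  calc (n:ℝ) * (∫⁻ t in S, F t).toReal ≤ (n:ℝ) * (W / Dv) :=
      mul_le_mul_of_nonneg_left htoReal hnR.le
    _ ≤ 3 * (x + 1/n) / (n * Dv) := hfin


end Stmt19Aux

theorem stmt19 (n : ℕ) (hn : 0 < n) (α : ℝ) (hα : 0 < α) (hαn : α ≤ 1 / n)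
    (x : ℝ) (hx : 0 ≤ x) :
    (∀ y : ℝ, 0 ≤ y → y < x →
      (∫ t in Set.Ioc (0 : ℝ) y, Ukernel n α x t) ≤
        3 * (x + 1 / n) / (n * (x - y) ^ 2)) ∧
    (∀ z : ℝ, x < z →
      (∫ t in Set.Ioi z, Ukernel n α x t) ≤
        3 * (x + 1 / n) / (n * (z - x) ^ 2)) := by
  constructor
  · intro y hy0 hyx
    refine Stmt19Aux.master hn hα hαn hx measurableSet_Ioc Set.Ioc_subset_Ioi_self
      (pow_pos (sub_pos.2 hyx) 2) (fun t ht => ?_)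
    have h1 : x - y ≤ x - t := by linarith [ht.2]
    have h0 : (0:ℝ) ≤ x - y := by linarith
    calc (x - y)^2 ≤ (x - t)^2 := pow_le_pow_left₀ h0 h1 2
      _ = (t - x)^2 := by ring
  · intro z hz
    refine Stmt19Aux.master hn hα hαn hx measurableSet_Ioi
      (Set.Ioi_subset_Ioi (by linarith)) (pow_pos (sub_pos.2 hz) 2) (fun t ht => ?_)
    have h1 : z - x ≤ t - x := by
      have := Set.mem_Ioi.1 ht; linarith
    have h0 : (0:ℝ) ≤ z - x := by linarith
    exact pow_le_pow_left₀ h0 h1 2
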